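/- Let H be a real symmetric positive definite n×n matrix and A a real m×n matrix with full row rank. Let S = A H⁻¹ Aᵀ, K = [[H, Aᵀ], [A, 0]], T = [[H, 0], [0, S]], and M = T⁻¹K. Then (M − I)(M² − M − I) = 0, where I denotes the identity matrix of size n+m. -/

import Mathlib

open Matrix

lemma fromBlocks_sub' {n m : ℕ} (P P' : Matrix (Fin n) (Fin n) ℝ) (Q Q' : Matrix (Fin n) (Fin m) ℝ)
    (R R' : Matrix (Fin m) (Fin n) ℝ) (D D' : Matrix (Fin m) (Fin m) ℝ) :
    Matrix.fromBlocks P Q R D - Matrix.fromBlocks P' Q' R' D' =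
      Matrix.fromBlocks (P - P') (Q - Q') (R - R') (D - D') := by
  rw [sub_eq_add_neg, Matrix.fromBlocks_neg, Matrix.fromBlocks_add]
  simp [sub_eq_add_neg]

/-- With `H` symmetric positive definite, `A` of full row rank, `S = A H⁻¹ Aᵀ`,
`K = [[H, Aᵀ],[A, 0]]`, `T = diag(H, S)` and `M = T⁻¹K`, the annihilation identity
`(M − I)(M² − M − I) = 0` holds. -/
theorem stmt_4 (n m : ℕ) (H : Matrix (Fin n) (Fin n) ℝ) (A : Matrix (Fin m) (Fin n) ℝ)
    (hHsymm : H.IsSymm) (hHpd : ∀ x : Fin n → ℝ, x ≠ 0 → 0 < x ⬝ᵥ (H *ᵥ x))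
    (hrank : ∀ y : Fin m → ℝ, Aᵀ *ᵥ y = 0 → y = 0) :
    let S : Matrix (Fin m) (Fin m) ℝ := A * H⁻¹ * Aᵀ
    let K : Matrix (Fin n ⊕ Fin m) (Fin n ⊕ Fin m) ℝ :=
      Matrix.fromBlocks H Aᵀ A (0 : Matrix (Fin m) (Fin m) ℝ)
    let T : Matrix (Fin n ⊕ Fin m) (Fin n ⊕ Fin m) ℝ :=
      Matrix.fromBlocks H 0 0 S
    let M : Matrix (Fin n ⊕ Fin m) (Fin n ⊕ Fin m) ℝ := T⁻¹ * K
    (M - 1) * (M * M - M - 1) = 0 := by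
  intro S K T M
  have hHherm : H.IsHermitian := by
    simpa [Matrix.IsHermitian, Matrix.conjTranspose_eq_transpose_of_trivial, Matrix.IsSymm] using hHsymm
  have hH : H.PosDef := Matrix.PosDef.of_dotProduct_mulVec_pos hHherm (fun x hx => by simpa using hHpd x hx)
  have hHinv : H⁻¹.PosDef := hH.inv
  have hAH : Aᴴ = Aᵀ := by ext i j; simp [Matrix.conjTranspose_apply]
  have hATH : Aᵀᴴ = A := by ext i j; simp [Matrix.conjTranspose_apply]
  have hS : S.PosDef := by
    refine Matrix.PosDef.of_dotProduct_mulVec_pos ?_ ?_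
    · show (A * H⁻¹ * Aᵀ)ᴴ = A * H⁻¹ * Aᵀ
      simp only [Matrix.conjTranspose_mul, hAH, hATH, hHinv.isHermitian.eq, Matrix.mul_assoc]
    · intro y hy
      have hz : Aᵀ *ᵥ y ≠ 0 := fun h => hy (hrank y h)
      have h1 := hHinv.dotProduct_mulVec_pos hz
      have key : star y ⬝ᵥ S *ᵥ y = star (Aᵀ *ᵥ y) ⬝ᵥ H⁻¹ *ᵥ (Aᵀ *ᵥ y) := by
        simp only [star_trivial]
        show y ⬝ᵥ (A * H⁻¹ * Aᵀ) *ᵥ y = _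
        rw [Matrix.mul_assoc, ← Matrix.mulVec_mulVec, Matrix.dotProduct_mulVec,
          ← Matrix.mulVec_transpose, ← Matrix.mulVec_mulVec]
      rw [key]; exact h1
  have hHdet : IsUnit H.det := (Matrix.isUnit_iff_isUnit_det H).mp hH.isUnit
  have hSdet : IsUnit S.det := (Matrix.isUnit_iff_isUnit_det S).mp hS.isUnit
  have hHH : H * H⁻¹ = 1 := Matrix.mul_nonsing_inv H hHdet
  have hHH' : H⁻¹ * H = 1 := Matrix.nonsing_inv_mul H hHdet
  have hSS : S * S⁻¹ = 1 := Matrix.mul_nonsing_inv S hSdet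
  have hSS' : S⁻¹ * S = 1 := Matrix.nonsing_inv_mul S hSdet
  have hTinv : T⁻¹ = Matrix.fromBlocks H⁻¹ 0 0 S⁻¹ := by
    apply Matrix.inv_eq_right_inv
    rw [show T = Matrix.fromBlocks H 0 0 S from rfl, Matrix.fromBlocks_multiply]
    simp [hHH, hSS, Matrix.fromBlocks_one]
  set B : Matrix (Fin n) (Fin m) ℝ := H⁻¹ * Aᵀ with hB
  set C : Matrix (Fin m) (Fin n) ℝ := S⁻¹ * A with hC
  have hCB : C * B = 1 := by
    rw [hC, hB, Matrix.mul_assoc, ← Matrix.mul_assoc A]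
    exact hSS'
  have hM : M = Matrix.fromBlocks 1 B C 0 := by
    rw [show M = T⁻¹ * K from rfl, hTinv, show K = Matrix.fromBlocks H Aᵀ A 0 from rfl,
      Matrix.fromBlocks_multiply]
    simp [hHH', hB, hC]
  have hMM : Matrix.fromBlocks (1 : Matrix (Fin n) (Fin n) ℝ) B C 0 *
      Matrix.fromBlocks 1 B C 0 = Matrix.fromBlocks (1 + B * C) B C 1 := by
    rw [Matrix.fromBlocks_multiply]
    simp [hCB]
  rw [hM, hMM, ← Matrix.fromBlocks_one, fromBlocks_sub', fromBlocks_sub', fromBlocks_sub',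
    Matrix.fromBlocks_multiply]
  simp only [sub_zero, zero_sub, sub_self, add_sub_cancel_left]
  rw [← Matrix.fromBlocks_zero]
  simp [Matrix.mul_sub, ← Matrix.mul_assoc, hCB]
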